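/- Let S₁ = {e^{i2πn/M} : 0 ≤ n < M} and S₂ = e^{iθ}S₁ with 0 < θ < 2π/M. Then every element of the sumset S₁ + S₂ = {a + b : a ∈ S₁, b ∈ S₂} has absolute value belonging to the set {2cos(πm/M + θ/2) : 0 ≤ m ≤ M/2 − 1} ∪ {2cos(π(m+1)/M − θ/2) : 0 ≤ m ≤ M/2 − 1}. -/

import Mathlib

open Real

lemma abs_exp_add_exp (x y : ℝ) :
    ‖Complex.exp (Complex.I * x) + Complex.exp (Complex.I * y)‖ =
      2 * |Real.cos ((x - y) / 2)| := by
  have h : Complex.exp (Complex.I * x) + Complex.exp (Complex.I * y) =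
      Complex.exp (Complex.I * (((x + y) / 2 : ℝ))) *
        (2 * Complex.cos (((x - y) / 2 : ℝ))) := by
    rw [Complex.cos]
    rw [show (2:ℂ) * ((Complex.exp ((((x - y) / 2 : ℝ)) * Complex.I) +
        Complex.exp (-(((x - y) / 2 : ℝ)) * Complex.I)) / 2) =
        Complex.exp ((((x - y) / 2 : ℝ)) * Complex.I) +
        Complex.exp (-(((x - y) / 2 : ℝ)) * Complex.I) by ring]
    rw [mul_add, ← Complex.exp_add, ← Complex.exp_add]
    push_cast
    ring_nf
  rw [h, norm_mul, norm_mul]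
  rw [show Complex.I * (((x + y) / 2 : ℝ)) = (((x + y) / 2 : ℝ)) * Complex.I by ring]
  rw [Complex.norm_exp_ofReal_mul_I, one_mul, ← Complex.ofReal_cos, Complex.norm_real]
  simp

/-- Every element of the sumset of an `M`-PSK constellation with its rotation by
`θ` has modulus `2cos(πm/M + θ/2)` or `2cos(π(m+1)/M − θ/2)` for some
`0 ≤ m ≤ M/2 − 1`. -/
theorem stmt_7 (M : ℕ) (hM : 0 < M) (hEven : Even M)
    (θ : ℝ) (hθ0 : 0 < θ) (hθ : θ < 2 * π / M) :
    ∀ a b : ℂ,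
      (∃ n : ℕ, n < M ∧ a = Complex.exp (Complex.I * (2 * π * n / M : ℝ))) →
      (∃ n' : ℕ, n' < M ∧ b = Complex.exp (Complex.I * (2 * π * n' / M + θ : ℝ))) →
      ∃ m : ℕ, m ≤ M / 2 - 1 ∧
        (‖a + b‖ = 2 * Real.cos (π * m / M + θ / 2) ∨
         ‖a + b‖ = 2 * Real.cos (π * (m + 1) / M - θ / 2)) := by
  rintro a b ⟨n, hn, rfl⟩ ⟨n', hn', rfl⟩
  have hMdiv : M / 2 * 2 = M := Nat.div_two_mul_two_of_even hEven
  have hM2 : 2 ≤ M := by omega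
  have hMR : (0:ℝ) < M := by exact_mod_cast hM
  have hMR2 : (2:ℝ) ≤ M := by exact_mod_cast hM2
  have hπ : 0 < π := Real.pi_pos
  have hθ2 : θ / 2 < π / M := by
    rw [lt_div_iff₀ hMR] at hθ ⊢; linarith
  have hπM : 0 < π / M := by positivity
  have hπM2 : π / M ≤ π / 2 := by
    apply div_le_div_of_nonneg_left hπ.le (by norm_num) hMR2
  rw [abs_exp_add_exp]
  have key : (2 * π * n / M - (2 * π * n' / M + θ)) / 2
      = π * (((n:ℤ) - n' : ℤ) : ℝ) / M - θ / 2 := by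
    push_cast; ring
  rw [key]
  set d : ℤ := (n:ℤ) - n' with hdd
  set k : ℤ := d % M with hkdef
  have hk0 : 0 ≤ k := Int.emod_nonneg d (by exact_mod_cast hM.ne')
  have hkM : k < M := Int.emod_lt_of_pos d (by exact_mod_cast hM)
  have hd : d = M * (d / M) + k := (Int.mul_ediv_add_emod d M).symm
  have hsplit : π * (d:ℝ) / M - θ / 2
      = (π * (k:ℝ) / M - θ / 2) + (d / M : ℤ) * π := by
    have hdr : (d:ℝ) = M * ((d / M : ℤ) : ℝ) + k := by exact_mod_cast hd
    rw [hdr]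
    field_simp
    ring
  have habs : |(-1:ℝ) ^ (d / (M:ℤ))| = 1 := by
    rcases Int.even_or_odd (d / (M:ℤ)) with h | h
    · rw [h.neg_one_zpow]; simp
    · rw [Odd.neg_one_zpow h]; simp
  rw [hsplit, Real.cos_add_int_mul_pi, abs_mul, habs, one_mul]
  set k' : ℕ := k.toNat with hk'
  have hkk' : (k:ℝ) = (k' : ℝ) := by exact_mod_cast (Int.toNat_of_nonneg hk0).symm
  have hk'M : k' < M := by omega
  rw [hkk']
  by_cases h0 : k' = 0
  · refine ⟨0, Nat.zero_le _, Or.inl ?_⟩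
    rw [h0]
    push_cast
    rw [show π * 0 / M - θ / 2 = -(π * 0 / M + θ / 2) by ring, Real.cos_neg]
    rw [abs_of_nonneg]
    apply Real.cos_nonneg_of_mem_Icc
    constructor <;> simp <;> nlinarith
  by_cases h1 : k' ≤ M / 2
  · have hk1 : 1 ≤ k' := by omega
    have h2k : 2 * k' ≤ M := by omega
    have h2kR : 2 * (k':ℝ) ≤ M := by exact_mod_cast h2k
    have hk1R : (1:ℝ) ≤ k' := by exact_mod_cast hk1
    refine ⟨k' - 1, by omega, Or.inr ?_⟩
    have hcast : ((k' - 1 : ℕ) : ℝ) + 1 = (k' : ℝ) := by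
      have : ((k' - 1 : ℕ) : ℝ) = (k' : ℝ) - 1 := by
        push_cast [Nat.cast_sub hk1]; ring
      rw [this]; ring
    rw [hcast, abs_of_nonneg]
    apply Real.cos_nonneg_of_mem_Icc
    constructor
    · have hlow : π * 1 / ↑M ≤ π * (k':ℝ) / ↑M := by gcongr
      have heq : π * 1 / (M:ℝ) = π / M := by ring
      rw [heq] at hlow
      linarith
    · have : π * (k':ℝ) / M ≤ π / 2 := by
        rw [div_le_div_iff₀ hMR (by norm_num : (0:ℝ) < 2)]
        nlinarith
      linarith
  · have hk2 : M / 2 + 1 ≤ k' := by omega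
    have h2kR : (M:ℝ) + 2 ≤ 2 * (k':ℝ) := by
      have : M + 2 ≤ 2 * k' := by omega
      exact_mod_cast this
    have hk'MR : (k':ℝ) ≤ M := by exact_mod_cast hk'M.le
    refine ⟨M - k', by omega, Or.inl ?_⟩
    have hcast : ((M - k' : ℕ) : ℝ) = (M : ℝ) - k' := by
      push_cast [Nat.cast_sub hk'M.le]; ring
    have hrewrite : π * ((M - k' : ℕ) : ℝ) / M + θ / 2
        = π - (π * (k':ℝ) / M - θ / 2) := by
      rw [hcast]
      field_simp
      ring
    rw [hrewrite, Real.cos_pi_sub, abs_of_nonpos]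
    apply Real.cos_nonpos_of_pi_div_two_le_of_le
    · have hθM : θ * M < π * 2 := by
        rw [div_lt_div_iff₀ (by norm_num : (0:ℝ) < 2) hMR] at hθ2
        linarith
      have hmain : π / 2 + θ / 2 ≤ π * (k':ℝ) / M := by
        rw [le_div_iff₀ hMR]
        nlinarith
      linarith
    · have : π * (k':ℝ) / M ≤ π := by
        rw [div_le_iff₀ hMR]
        exact mul_le_mul_of_nonneg_left hk'MR hπ.le
      linarith
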